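/- (Two-parameter exactness.) Let H₀, H₁, H₂ ∈ S^n and G(δ) = H₀ + δ₁H₁ + δ₂H₂. Then G(δ) ⪰ 0 for all δ ∈ [-1,1]² if and only if there exist a degree-≤2 SOS polynomial matrix S₀ ∈ Σ[δ]^n and positive semidefinite S₁, S₂ ∈ S^n with G(δ) = S₀(δ) + (1-δ₁²)S₁ + (1-δ₂²)S₂ identically. -/

import Mathlib

open Matrix MvPolynomial

/-- A symmetric polynomial matrix `S` is a sum of squares if `S = T * Tᵀ`
for some polynomial matrix `T`. -/
def IsSOSMatrix {n m : ℕ} (S : Matrix (Fin n) (Fin n) (MvPolynomial (Fin m) ℝ)) : Prop :=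
  ∃ (q : ℕ) (T : Matrix (Fin n) (Fin q) (MvPolynomial (Fin m) ℝ)), S = T * Tᵀ

open Matrix
namespace TwoParam
set_option linter.unusedSectionVars false
set_option maxHeartbeats 1000000
variable {ι κ : Type*} [Fintype ι] [Fintype κ]

lemma star_triv (x : ι → ℝ) : star x = x := by funext i; simp
lemma psd_form {M : Matrix ι ι ℝ} (hM : M.PosSemidef) (x : ι → ℝ) :
    0 ≤ x ⬝ᵥ M *ᵥ x := by simpa [star_triv] using hM.dotProduct_mulVec_nonneg x
lemma psd_of_form {M : Matrix ι ι ℝ} (h1 : M.IsHermitian) (h2 : ∀ x : ι → ℝ, 0 ≤ x ⬝ᵥ M *ᵥ x) :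
    M.PosSemidef := .of_dotProduct_mulVec_nonneg h1 fun x => by simpa [star_triv] using h2 x
lemma psd_smul {M : Matrix ι ι ℝ} (hM : M.PosSemidef) {c : ℝ} (hc : 0 ≤ c) :
    (c • M).PosSemidef := by
  refine .of_dotProduct_mulVec_nonneg ?_ fun x => ?_
  · unfold Matrix.IsHermitian
    rw [Matrix.conjTranspose_smul, hM.1.eq]
    simp
  · rw [Matrix.smul_mulVec, dotProduct_smul]
    exact mul_nonneg hc (hM.dotProduct_mulVec_nonneg x)
lemma conjT_eq_T (A : Matrix ι κ ℝ) : Aᴴ = Aᵀ := by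
  ext i j; simp [Matrix.conjTranspose_apply]
lemma psd_fromBlocks_diag {A : Matrix ι ι ℝ} {D : Matrix κ κ ℝ}
    (hA : A.PosSemidef) (hD : D.PosSemidef) :
    (Matrix.fromBlocks A 0 0 D).PosSemidef := by
  refine psd_of_form ?_ fun x => ?_
  · unfold Matrix.IsHermitian
    rw [Matrix.fromBlocks_conjTranspose, hA.1.eq, hD.1.eq]
    simp
  · have hx : x = Sum.elim (x ∘ Sum.inl) (x ∘ Sum.inr) := by
      funext i; cases i <;> rfl
    rw [Matrix.fromBlocks_mulVec, hx, sumElim_dotProduct_sumElim]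
    simp only [Matrix.zero_mulVec, add_zero, zero_add]
    exact add_nonneg (psd_form hA _) (psd_form hD _)
lemma herm_apply {M : Matrix ι ι ℝ} (hM : M.IsHermitian) (u v : ι) : M u v = M v u := by
  have := hM.apply u v
  simpa using this.symm

lemma psd_entry_bound [DecidableEq ι] {M : Matrix ι ι ℝ} (hM : M.PosSemidef) (u v : ι) :
    |M u v| ≤ (M u u + M v v) / 2 + 1 := by
  by_cases huv : u = v
  · subst huv
    have h0 := psd_form hM (Pi.single u 1)
    simp [Matrix.mulVec_single, single_dotProduct] at h0
    rw [abs_of_nonneg h0]; linarith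
  · have h1 := psd_form hM (Pi.single u 1 + Pi.single v 1)
    have h2 := psd_form hM (Pi.single u 1 + Pi.single v (-1))
    have hsym := herm_apply hM.1 v u
    simp [Matrix.mulVec_add, add_dotProduct, dotProduct_add, Matrix.mulVec_single,
      single_dotProduct, Pi.single_apply, huv, Ne.symm huv] at h1 h2
    rw [abs_le]
    constructor <;> nlinarith [h1, h2]

lemma psd_diag_nonneg [DecidableEq ι] {M : Matrix ι ι ℝ} (hM : M.PosSemidef) (u : ι) :
    0 ≤ M u u := by
  have := psd_form hM (Pi.single u 1)
  simpa [Matrix.mulVec_single, single_dotProduct] using this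

lemma psd_congr {M : Matrix ι ι ℝ} (hM : M.PosSemidef) (B : Matrix ι κ ℝ) :
    (Bᵀ * M * B).PosSemidef := by
  have := hM.conjTranspose_mul_mul_same B
  rwa [conjT_eq_T] at this

variable {n : ℕ}

lemma schur_psd (h J : Matrix (Fin n) (Fin n) ℝ) (hh : h.PosDef) (hhs : hᵀ = h)
    (hJs : Jᵀ = J) (hp : (h + J).PosSemidef) (hm : (h - J).PosSemidef) :
    (h - J * h⁻¹ * J).PosSemidef := by
  have hd : IsUnit h.det := hh.det_pos.ne'.isUnit
  have hWs : h⁻¹ᵀ = h⁻¹ := by rw [Matrix.transpose_nonsing_inv, hhs]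
  have expand : ∀ K : Matrix (Fin n) (Fin n) ℝ,
      (1 - K * h⁻¹) * ((h + K) * (1 - h⁻¹ * K)) =
        h - K - K * (h⁻¹ * K) + K * (h⁻¹ * (K * (h⁻¹ * K))) := by
    intro K
    simp only [Matrix.mul_sub, Matrix.sub_mul, Matrix.mul_add, Matrix.add_mul,
      Matrix.one_mul, Matrix.mul_one, Matrix.mul_assoc,
      Matrix.mul_nonsing_inv_cancel_left _ _ hd, Matrix.nonsing_inv_mul_cancel_left _ _ hd,
      Matrix.nonsing_inv_mul _ hd, Matrix.mul_nonsing_inv _ hd]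
    abel
  have key : h - J * h⁻¹ * J =
      (1/2 : ℝ) • ((1 - h⁻¹*J)ᵀ * ((h + J) * (1 - h⁻¹*J))) +
      (1/2 : ℝ) • ((1 + h⁻¹*J)ᵀ * ((h - J) * (1 + h⁻¹*J))) := by
    have t1 : (1 - h⁻¹*J)ᵀ = 1 - J * h⁻¹ := by
      rw [Matrix.transpose_sub, Matrix.transpose_mul, hWs, hJs, Matrix.transpose_one]
    have t2 : (1 + h⁻¹*J)ᵀ = 1 + J * h⁻¹ := by
      rw [Matrix.transpose_add, Matrix.transpose_mul, hWs, hJs, Matrix.transpose_one]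
    rw [t1, t2, expand J]
    have e2 : (1 + J * h⁻¹) * ((h - J) * (1 + h⁻¹ * J)) =
        h + J - J * (h⁻¹ * J) - J * (h⁻¹ * (J * (h⁻¹ * J))) := by
      calc (1 + J * h⁻¹) * ((h - J) * (1 + h⁻¹ * J))
          = (1 - (-J) * h⁻¹) * ((h + (-J)) * (1 - h⁻¹ * (-J))) := by
            simp [Matrix.neg_mul, Matrix.mul_neg, sub_neg_eq_add, sub_eq_add_neg]
        _ = h - (-J) - (-J) * (h⁻¹ * (-J)) + (-J) * (h⁻¹ * ((-J) * (h⁻¹ * (-J)))) := expand (-J)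
        _ = h + J - J * (h⁻¹ * J) - J * (h⁻¹ * (J * (h⁻¹ * J))) := by
            simp [Matrix.neg_mul, Matrix.mul_neg]; abel
    rw [e2]
    rw [Matrix.mul_assoc] at *
    module
  rw [key]
  have p1 : ((1 - h⁻¹*J)ᵀ * ((h + J) * (1 - h⁻¹*J))).PosSemidef := by
    have := psd_congr hp (1 - h⁻¹*J)
    rwa [Matrix.mul_assoc] at this
  have p2 : ((1 + h⁻¹*J)ᵀ * ((h - J) * (1 + h⁻¹*J))).PosSemidef := by
    have := psd_congr hm (1 + h⁻¹*J)
    rwa [Matrix.mul_assoc] at this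
  exact Matrix.PosSemidef.add (psd_smul p1 (by norm_num)) (psd_smul p2 (by norm_num))

/-- Explicit certificate when the center matrix is positive definite. -/
lemma cert_posdef (A H₁ H₂ : Matrix (Fin n) (Fin n) ℝ) (hAs : Aᵀ = A) (h1 : H₁ᵀ = H₁)
    (h2 : H₂ᵀ = H₂) (hA : A.PosDef)
    (hv₁ : (A + (H₁ + H₂)).PosSemidef) (hv₂ : (A - (H₁ + H₂)).PosSemidef)
    (hv₃ : (A + (H₁ - H₂)).PosSemidef) (hv₄ : (A - (H₁ - H₂)).PosSemidef) :
    ∃ Q : Matrix (Fin n ⊕ (Fin n ⊕ Fin n)) (Fin n ⊕ (Fin n ⊕ Fin n)) ℝ,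
      Q.PosSemidef ∧ ∀ a b : Fin n,
      Q (.inl a) (.inl b) + Q (.inr (.inl a)) (.inr (.inl b))
          + Q (.inr (.inr a)) (.inr (.inr b)) = A a b ∧
      Q (.inl a) (.inr (.inl b)) + Q (.inr (.inl a)) (.inl b) = H₁ a b ∧
      Q (.inl a) (.inr (.inr b)) + Q (.inr (.inr a)) (.inl b) = H₂ a b ∧
      Q (.inr (.inl a)) (.inr (.inr b)) + Q (.inr (.inr a)) (.inr (.inl b)) = 0 := by
  have hd : IsUnit A.det := hA.det_pos.ne'.isUnit
  set W : Matrix (Fin n) (Fin n) ℝ := A⁻¹ with hW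
  have hWs : Wᵀ = W := by rw [hW, Matrix.transpose_nonsing_inv, hAs]
  set Kp : Matrix (Fin n) (Fin n) ℝ := A - (H₁ + H₂) * W * (H₁ + H₂) with hKp
  set Km : Matrix (Fin n) (Fin n) ℝ := A - (H₁ - H₂) * W * (H₁ - H₂) with hKm
  have hKpPsd : Kp.PosSemidef :=
    schur_psd A (H₁ + H₂) hA hAs (by rw [Matrix.transpose_add, h1, h2]) hv₁ hv₂
  have hKmPsd : Km.PosSemidef :=
    schur_psd A (H₁ - H₂) hA hAs (by rw [Matrix.transpose_sub, h1, h2]) hv₃ hv₄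
  set Dd : Matrix (Fin n ⊕ Fin n) (Fin n ⊕ Fin n) ℝ := fromBlocks 1 1 1 (-1) with hDd
  set Bc : Matrix (Fin n) (Fin n ⊕ Fin n) ℝ := fromCols H₁ H₂ with hBc
  set E : Matrix (Fin n ⊕ (Fin n ⊕ Fin n)) (Fin n ⊕ (Fin n ⊕ Fin n)) ℝ :=
    fromBlocks A Bc 0 Dd with hE
  set c₁ : Matrix (Fin n ⊕ Fin n) (Fin n ⊕ Fin n) ℝ :=
    fromBlocks ((8⁻¹ : ℝ) • Kp) 0 0 ((8⁻¹ : ℝ) • Km) with hc₁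
  set Cm : Matrix (Fin n ⊕ (Fin n ⊕ Fin n)) (Fin n ⊕ (Fin n ⊕ Fin n)) ℝ :=
    fromBlocks ((2⁻¹ : ℝ) • W) 0 0 c₁ with hCm
  refine ⟨Eᵀ * Cm * E, ?_, ?_⟩
  · refine psd_congr ?_ E
    refine psd_fromBlocks_diag (psd_smul hA.inv.posSemidef (by norm_num)) ?_
    exact psd_fromBlocks_diag (psd_smul hKpPsd (by norm_num)) (psd_smul hKmPsd (by norm_num))
  -- compute the blocks of Q
  have hBt : Bcᵀ = fromRows H₁ H₂ := by rw [hBc, Matrix.transpose_fromCols, h1, h2]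
  have hDt : Ddᵀ = Dd := by
    rw [hDd, Matrix.fromBlocks_transpose, Matrix.transpose_one, Matrix.transpose_neg,
      Matrix.transpose_one]
  have hEt : Eᵀ = fromBlocks A 0 (fromRows H₁ H₂) Dd := by
    rw [hE, Matrix.fromBlocks_transpose, hAs, hBt, hDt, Matrix.transpose_zero]
  have hQ : Eᵀ * Cm * E = fromBlocks ((2⁻¹:ℝ) • A)
      ((2⁻¹:ℝ) • Bc) ((2⁻¹:ℝ) • (fromRows H₁ H₂))
      (fromBlocks
        ((2⁻¹:ℝ) • (H₁ * W * H₁) + ((8⁻¹:ℝ) • Kp + (8⁻¹:ℝ) • Km))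
        ((2⁻¹:ℝ) • (H₁ * W * H₂) + ((8⁻¹:ℝ) • Kp - (8⁻¹:ℝ) • Km))
        ((2⁻¹:ℝ) • (H₂ * W * H₁) + ((8⁻¹:ℝ) • Kp - (8⁻¹:ℝ) • Km))
        ((2⁻¹:ℝ) • (H₂ * W * H₂) + ((8⁻¹:ℝ) • Kp + (8⁻¹:ℝ) • Km))) := by
    have smul_fromRows : ∀ (c : ℝ) (X Y : Matrix (Fin n) (Fin n) ℝ),
        c • fromRows X Y = fromRows (c • X) (c • Y) := by
      intro c X Y; ext i j; cases i <;> rfl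
    have g00 : A * ((2⁻¹:ℝ) • W) * A = (2⁻¹:ℝ) • A := by
      rw [Matrix.mul_smul, Matrix.smul_mul, hW, Matrix.mul_nonsing_inv _ hd, Matrix.one_mul]
    have g01 : A * ((2⁻¹:ℝ) • W) * Bc = (2⁻¹:ℝ) • Bc := by
      rw [Matrix.mul_smul, Matrix.smul_mul, hW, Matrix.mul_nonsing_inv _ hd, Matrix.one_mul]
    have gH : ∀ X : Matrix (Fin n) (Fin n) ℝ, X * ((2⁻¹:ℝ) • W) * A = (2⁻¹:ℝ) • X := by
      intro X
      rw [Matrix.mul_smul, Matrix.smul_mul, hW, Matrix.nonsing_inv_mul_cancel_right _ _ hd]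
    have g10 : (fromRows H₁ H₂) * ((2⁻¹:ℝ) • W) * A = (2⁻¹:ℝ) • fromRows H₁ H₂ := by
      rw [Matrix.fromRows_mul, Matrix.fromRows_mul, gH, gH, smul_fromRows]
    have gXY : ∀ X Y : Matrix (Fin n) (Fin n) ℝ,
        X * ((2⁻¹:ℝ) • W) * Y = (2⁻¹:ℝ) • (X * W * Y) := by
      intro X Y
      rw [Matrix.mul_smul, Matrix.smul_mul]
    have g11a : (fromRows H₁ H₂) * ((2⁻¹:ℝ) • W) * Bc =
        fromBlocks ((2⁻¹:ℝ) • (H₁ * W * H₁)) ((2⁻¹:ℝ) • (H₁ * W * H₂))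
          ((2⁻¹:ℝ) • (H₂ * W * H₁)) ((2⁻¹:ℝ) • (H₂ * W * H₂)) := by
      rw [hBc, Matrix.fromRows_mul, Matrix.fromRows_mul_fromCols, gXY, gXY, gXY, gXY]
    have g11b : Dd * c₁ * Dd = fromBlocks
        ((8⁻¹:ℝ) • Kp + (8⁻¹:ℝ) • Km) ((8⁻¹:ℝ) • Kp - (8⁻¹:ℝ) • Km)
        ((8⁻¹:ℝ) • Kp - (8⁻¹:ℝ) • Km) ((8⁻¹:ℝ) • Kp + (8⁻¹:ℝ) • Km) := by
      rw [hDd, hc₁, Matrix.fromBlocks_multiply, Matrix.fromBlocks_multiply]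
      simp only [Matrix.one_mul, Matrix.mul_one, Matrix.mul_zero, Matrix.zero_mul,
        Matrix.neg_mul, Matrix.mul_neg, add_zero, zero_add, neg_neg]
      ext (i | i) (j | j) <;>
        simp only [Matrix.fromBlocks_apply₁₁, Matrix.fromBlocks_apply₁₂,
          Matrix.fromBlocks_apply₂₁, Matrix.fromBlocks_apply₂₂, Matrix.add_apply,
          Matrix.sub_apply, Matrix.neg_apply] <;> ring
    calc Eᵀ * Cm * E = fromBlocks A 0 (fromRows H₁ H₂) Dd * Cm * E := by rw [hEt]
      _ = fromBlocks (A * ((2⁻¹:ℝ) • W)) 0 ((fromRows H₁ H₂) * ((2⁻¹:ℝ) • W)) (Dd * c₁) * E := by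
          rw [hCm, Matrix.fromBlocks_multiply]
          simp only [Matrix.mul_zero, Matrix.zero_mul, add_zero, zero_add]
      _ = fromBlocks (A * ((2⁻¹:ℝ) • W) * A) (A * ((2⁻¹:ℝ) • W) * Bc)
            ((fromRows H₁ H₂) * ((2⁻¹:ℝ) • W) * A)
            ((fromRows H₁ H₂) * ((2⁻¹:ℝ) • W) * Bc + Dd * c₁ * Dd) := by
          rw [hE, Matrix.fromBlocks_multiply]
          simp only [Matrix.mul_zero, Matrix.zero_mul, add_zero, zero_add, Matrix.mul_assoc]
      _ = _ := by
          rw [g00, g01, g10, g11a, g11b, Matrix.fromBlocks_add]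
  have key0 : ((2⁻¹:ℝ) • A) + ((2⁻¹:ℝ) • (H₁ * W * H₁) + ((8⁻¹:ℝ) • Kp + (8⁻¹:ℝ) • Km))
      + ((2⁻¹:ℝ) • (H₂ * W * H₂) + ((8⁻¹:ℝ) • Kp + (8⁻¹:ℝ) • Km)) = A := by
    rw [hKp, hKm]
    simp only [Matrix.add_mul, Matrix.mul_add, Matrix.sub_mul, Matrix.mul_sub, Matrix.mul_assoc]
    module
  have key3 : ((2⁻¹:ℝ) • (H₁ * W * H₂) + ((8⁻¹:ℝ) • Kp - (8⁻¹:ℝ) • Km))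
      + ((2⁻¹:ℝ) • (H₂ * W * H₁) + ((8⁻¹:ℝ) • Kp - (8⁻¹:ℝ) • Km)) = 0 := by
    rw [hKp, hKm]
    simp only [Matrix.add_mul, Matrix.mul_add, Matrix.sub_mul, Matrix.mul_sub, Matrix.mul_assoc]
    module
  intro a b
  refine ⟨?_, ?_, ?_, ?_⟩
  · have := congrFun (congrFun key0 a) b
    rw [hQ]
    simpa [Matrix.fromBlocks_apply₁₁, Matrix.fromBlocks_apply₂₂, Matrix.add_apply] using this
  · rw [hQ]
    simp only [Matrix.fromBlocks_apply₁₂, Matrix.fromBlocks_apply₂₁, Matrix.smul_apply, hBc,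
      Matrix.fromCols_apply_inl, Matrix.fromRows_apply_inl, smul_eq_mul]
    ring
  · rw [hQ]
    simp only [Matrix.fromBlocks_apply₁₂, Matrix.fromBlocks_apply₂₁, Matrix.smul_apply, hBc,
      Matrix.fromCols_apply_inr, Matrix.fromRows_apply_inr, smul_eq_mul]
    ring
  · have := congrFun (congrFun key3 a) b
    rw [hQ]
    simpa [Matrix.fromBlocks_apply₂₂, Matrix.add_apply] using this



lemma cert_general (H₀ H₁ H₂ : Matrix (Fin n) (Fin n) ℝ) (h0 : H₀ᵀ = H₀) (h1 : H₁ᵀ = H₁)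
    (h2 : H₂ᵀ = H₂)
    (hyp : ∀ δ₁ δ₂ : ℝ, |δ₁| ≤ 1 → |δ₂| ≤ 1 → (H₀ + δ₁ • H₁ + δ₂ • H₂).PosSemidef) :
    ∃ Q : Matrix (Fin n ⊕ (Fin n ⊕ Fin n)) (Fin n ⊕ (Fin n ⊕ Fin n)) ℝ,
      Q.PosSemidef ∧ ∀ a b : Fin n,
      Q (.inl a) (.inl b) + Q (.inr (.inl a)) (.inr (.inl b))
          + Q (.inr (.inr a)) (.inr (.inr b)) = H₀ a b ∧
      Q (.inl a) (.inr (.inl b)) + Q (.inr (.inl a)) (.inl b) = H₁ a b ∧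
      Q (.inl a) (.inr (.inr b)) + Q (.inr (.inr a)) (.inl b) = H₂ a b ∧
      Q (.inr (.inl a)) (.inr (.inr b)) + Q (.inr (.inr a)) (.inr (.inl b)) = 0 := by
  classical
  have habs1 : |(1:ℝ)| ≤ 1 := by norm_num
  have habsm1 : |(-1:ℝ)| ≤ 1 := by norm_num
  have habs0 : |(0:ℝ)| ≤ 1 := by norm_num
  have hH₀psd : H₀.PosSemidef := by
    have := hyp 0 0 habs0 habs0
    simpa using this
  -- the perturbed family
  set ε : ℕ → ℝ := fun k => 1 / (k + 1) with hε
  have hεpos : ∀ k, 0 < ε k := fun k => by positivity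
  have hεle : ∀ k, ε k ≤ 1 := by
    intro k
    rw [hε]
    simp only [one_div]
    rw [inv_le_one_iff₀]
    right
    have : (0:ℝ) ≤ (k:ℝ) := Nat.cast_nonneg k
    linarith
  set A : ℕ → Matrix (Fin n) (Fin n) ℝ := fun k => H₀ + (ε k) • 1 with hA
  have hApd : ∀ k, (A k).PosDef := by
    intro k
    have hdiag : ((ε k) • (1 : Matrix (Fin n) (Fin n) ℝ)) = Matrix.diagonal fun _ => ε k := by
      ext i j
      by_cases h : i = j <;> simp [Matrix.diagonal_apply, Matrix.one_apply, h]
    have hpd : ((ε k) • (1 : Matrix (Fin n) (Fin n) ℝ)).PosDef := by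
      rw [hdiag]
      rw [Matrix.posDef_diagonal_iff]
      intro i; exact hεpos k
    have := hpd.add_posSemidef hH₀psd
    rw [hA]
    rwa [add_comm] at this
  have hAs : ∀ k, (A k)ᵀ = A k := by
    intro k
    rw [hA]
    simp [Matrix.transpose_add, h0, Matrix.transpose_smul]
  have vert : ∀ (k : ℕ) (e₁ e₂ : ℝ), |e₁| ≤ 1 → |e₂| ≤ 1 →
      (A k + (e₁ • H₁ + e₂ • H₂)).PosSemidef := by
    intro k e₁ e₂ he₁ he₂
    have hb := hyp e₁ e₂ he₁ he₂
    have heq : A k + (e₁ • H₁ + e₂ • H₂) = (H₀ + e₁ • H₁ + e₂ • H₂) + (ε k) • 1 := by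
      rw [hA]; module
    rw [heq]
    have hone : ((ε k) • (1 : Matrix (Fin n) (Fin n) ℝ)).PosSemidef :=
      psd_smul Matrix.PosSemidef.one (le_of_lt (hεpos k))
    exact hb.add hone
  have certk : ∀ k : ℕ,
      ∃ Q : Matrix (Fin n ⊕ (Fin n ⊕ Fin n)) (Fin n ⊕ (Fin n ⊕ Fin n)) ℝ,
      Q.PosSemidef ∧ ∀ a b : Fin n,
      Q (.inl a) (.inl b) + Q (.inr (.inl a)) (.inr (.inl b))
          + Q (.inr (.inr a)) (.inr (.inr b)) = A k a b ∧
      Q (.inl a) (.inr (.inl b)) + Q (.inr (.inl a)) (.inl b) = H₁ a b ∧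
      Q (.inl a) (.inr (.inr b)) + Q (.inr (.inr a)) (.inl b) = H₂ a b ∧
      Q (.inr (.inl a)) (.inr (.inr b)) + Q (.inr (.inr a)) (.inr (.inl b)) = 0 := by
    intro k
    apply cert_posdef (A k) H₁ H₂ (hAs k) h1 h2 (hApd k)
    · have := vert k 1 1 habs1 habs1
      have heq : A k + (H₁ + H₂) = A k + ((1:ℝ) • H₁ + (1:ℝ) • H₂) := by module
      rwa [heq]
    · have := vert k (-1) (-1) habsm1 habsm1
      have heq : A k - (H₁ + H₂) = A k + ((-1:ℝ) • H₁ + (-1:ℝ) • H₂) := by module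
      rwa [heq]
    · have := vert k 1 (-1) habs1 habsm1
      have heq : A k + (H₁ - H₂) = A k + ((1:ℝ) • H₁ + (-1:ℝ) • H₂) := by module
      rwa [heq]
    · have := vert k (-1) 1 habsm1 habs1
      have heq : A k - (H₁ - H₂) = A k + ((-1:ℝ) • H₁ + (1:ℝ) • H₂) := by module
      rwa [heq]
  choose Q hQpsd hQeq using certk
  -- uniform bound on the entries of Q k
  have tr_eq : ∀ k, (∑ u : Fin n ⊕ (Fin n ⊕ Fin n), Q k u u) = ∑ a, A k a a := by
    intro k
    rw [Fintype.sum_sum_type, Fintype.sum_sum_type, ← Finset.sum_add_distrib,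
      ← Finset.sum_add_distrib]
    apply Finset.sum_congr rfl
    intro a _
    have := (hQeq k a a).1
    linarith
  have diag_nonneg : ∀ k u, 0 ≤ Q k u u := fun k u => psd_diag_nonneg (hQpsd k) u
  set T : ℝ := (∑ a, H₀ a a) + n with hT
  have hT0 : 0 ≤ T := by
    rw [hT]
    have : 0 ≤ ∑ a, H₀ a a :=
      Finset.sum_nonneg fun a _ => psd_diag_nonneg hH₀psd a
    positivity
  have trA_le : ∀ k, (∑ a, A k a a) ≤ T := by
    intro k
    have : ∀ a, A k a a = H₀ a a + ε k := by
      intro a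
      rw [hA]
      simp [Matrix.one_apply]
    rw [Finset.sum_congr rfl fun a _ => this a, Finset.sum_add_distrib, hT]
    simp only [Finset.sum_const, Finset.card_univ, Fintype.card_fin, nsmul_eq_mul]
    have := hεle k
    have hn : (0:ℝ) ≤ n := Nat.cast_nonneg n
    nlinarith [hεpos k]
  have diag_le : ∀ k u, Q k u u ≤ T := by
    intro k u
    have h1 : Q k u u ≤ ∑ u' : Fin n ⊕ (Fin n ⊕ Fin n), Q k u' u' :=
      Finset.single_le_sum (fun i _ => diag_nonneg k i) (Finset.mem_univ u)
    have := tr_eq k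
    have := trA_le k
    linarith
  have entry_bound : ∀ k u v, |Q k u v| ≤ T + 1 := by
    intro k u v
    have h1 := psd_entry_bound (hQpsd k) u v
    have h2 := diag_le k u
    have h3 := diag_le k v
    have : (Q k u u + Q k v v) / 2 + 1 ≤ T + 1 := by linarith
    linarith
  -- extract a convergent subsequence
  set X := ((Fin n ⊕ (Fin n ⊕ Fin n)) × (Fin n ⊕ (Fin n ⊕ Fin n))) → ℝ with hX
  set xseq : ℕ → X := fun k p => Q k p.1 p.2 with hxseq
  have hmem : ∀ k, xseq k ∈ Metric.closedBall (0 : X) (T + 1) := by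
    intro k
    rw [Metric.mem_closedBall, dist_zero_right]
    rw [pi_norm_le_iff_of_nonneg (by linarith)]
    intro p
    rw [Real.norm_eq_abs]
    exact entry_bound k p.1 p.2
  obtain ⟨L, _, φ, hφmono, hφtend⟩ :=
    tendsto_subseq_of_bounded Metric.isBounded_closedBall hmem
  set Qlim : Matrix (Fin n ⊕ (Fin n ⊕ Fin n)) (Fin n ⊕ (Fin n ⊕ Fin n)) ℝ :=
    fun u v => L (u, v) with hQlim
  have hconv : ∀ u v, Filter.Tendsto (fun k => Q (φ k) u v) Filter.atTop (nhds (Qlim u v)) := by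
    intro u v
    have h := ((continuous_apply ((u, v) :
        (Fin n ⊕ (Fin n ⊕ Fin n)) × (Fin n ⊕ (Fin n ⊕ Fin n)))).tendsto L).comp hφtend
    exact h
  have hεconv : Filter.Tendsto (fun k => ε (φ k)) Filter.atTop (nhds 0) :=
    tendsto_one_div_add_atTop_nhds_zero_nat.comp hφmono.tendsto_atTop
  have hAconv : ∀ a b : Fin n,
      Filter.Tendsto (fun k => A (φ k) a b) Filter.atTop (nhds (H₀ a b)) := by
    intro a b
    have h1 : ∀ k, A (φ k) a b = H₀ a b + ε (φ k) * (1 : Matrix (Fin n) (Fin n) ℝ) a b := by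
      intro k
      rw [hA]
      simp
    have h2 : Filter.Tendsto (fun k => H₀ a b + ε (φ k) * (1 : Matrix (Fin n) (Fin n) ℝ) a b)
        Filter.atTop (nhds (H₀ a b + 0 * (1 : Matrix (Fin n) (Fin n) ℝ) a b)) :=
      tendsto_const_nhds.add (hεconv.mul tendsto_const_nhds)
    simp only [zero_mul, add_zero] at h2
    exact h2.congr fun k => (h1 k).symm
  refine ⟨Qlim, ?_, ?_⟩
  · refine psd_of_form ?_ ?_
    · unfold Matrix.IsHermitian
      ext u v
      rw [conjT_eq_T]
      show Qlim v u = Qlim u v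
      refine tendsto_nhds_unique ?_ (hconv u v)
      have heq : ∀ k, Q (φ k) u v = Q (φ k) v u := fun k => herm_apply (hQpsd (φ k)).1 u v
      exact (hconv v u).congr fun k => (heq k).symm
    · intro y
      have hforms : ∀ k, 0 ≤ y ⬝ᵥ Q (φ k) *ᵥ y := fun k => psd_form (hQpsd (φ k)) y
      have htend : Filter.Tendsto (fun k => y ⬝ᵥ Q (φ k) *ᵥ y) Filter.atTop
          (nhds (y ⬝ᵥ Qlim *ᵥ y)) := by
        simp only [dotProduct, Matrix.mulVec]
        apply tendsto_finset_sum
        intro u _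
        refine Filter.Tendsto.mul tendsto_const_nhds ?_
        apply tendsto_finset_sum
        intro v _
        exact (hconv u v).mul tendsto_const_nhds
      exact ge_of_tendsto' htend hforms
  · intro a b
    refine ⟨?_, ?_, ?_, ?_⟩
    · refine tendsto_nhds_unique (l := Filter.atTop) (f := fun k : ℕ =>
        Q (φ k) (.inl a) (.inl b) + Q (φ k) (.inr (.inl a)) (.inr (.inl b))
          + Q (φ k) (.inr (.inr a)) (.inr (.inr b))) ?_ ?_
      · exact ((hconv _ _).add (hconv _ _)).add (hconv _ _)
      · exact (hAconv a b).congr fun k => ((hQeq (φ k) a b).1).symm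
    · refine tendsto_nhds_unique (l := Filter.atTop) (f := fun k : ℕ =>
        Q (φ k) (.inl a) (.inr (.inl b)) + Q (φ k) (.inr (.inl a)) (.inl b)) ?_ ?_
      · exact (hconv _ _).add (hconv _ _)
      · exact tendsto_const_nhds.congr fun k => ((hQeq (φ k) a b).2.1).symm
    · refine tendsto_nhds_unique (l := Filter.atTop) (f := fun k : ℕ =>
        Q (φ k) (.inl a) (.inr (.inr b)) + Q (φ k) (.inr (.inr a)) (.inl b)) ?_ ?_
      · exact (hconv _ _).add (hconv _ _)
      · exact tendsto_const_nhds.congr fun k => ((hQeq (φ k) a b).2.2.1).symm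
    · refine tendsto_nhds_unique (l := Filter.atTop) (f := fun k : ℕ =>
        Q (φ k) (.inr (.inl a)) (.inr (.inr b)) + Q (φ k) (.inr (.inr a)) (.inr (.inl b))) ?_ ?_
      · exact (hconv _ _).add (hconv _ _)
      · exact tendsto_const_nhds.congr fun k => ((hQeq (φ k) a b).2.2.2).symm

end TwoParam

open TwoParam Filter

theorem two_parameter_exactness {n : ℕ}
    (H₀ H₁ H₂ : Matrix (Fin n) (Fin n) ℝ)
    (h0 : H₀.IsSymm) (h1 : H₁.IsSymm) (h2 : H₂.IsSymm) :
    (∀ δ₁ δ₂ : ℝ, |δ₁| ≤ 1 → |δ₂| ≤ 1 → (H₀ + δ₁ • H₁ + δ₂ • H₂).PosSemidef) ↔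
      ∃ (S₀ : Matrix (Fin n) (Fin n) (MvPolynomial (Fin 2) ℝ))
        (S₁ S₂ : Matrix (Fin n) (Fin n) ℝ),
        IsSOSMatrix S₀ ∧ (∀ a b, (S₀ a b).totalDegree ≤ 2) ∧
        S₁.PosSemidef ∧ S₂.PosSemidef ∧
        H₀.map MvPolynomial.C +
            (MvPolynomial.X 0 : MvPolynomial (Fin 2) ℝ) • H₁.map MvPolynomial.C +
            (MvPolynomial.X 1 : MvPolynomial (Fin 2) ℝ) • H₂.map MvPolynomial.C =
          S₀ + ((1 : MvPolynomial (Fin 2) ℝ) - MvPolynomial.X 0 ^ 2) • S₁.map MvPolynomial.C +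
            ((1 : MvPolynomial (Fin 2) ℝ) - MvPolynomial.X 1 ^ 2) • S₂.map MvPolynomial.C := by
  constructor
  · -- necessity: build the certificate
    intro hyp
    obtain ⟨Q, hQpsd, hQeq⟩ := cert_general H₀ H₁ H₂ h0.eq h1.eq h2.eq hyp
    obtain ⟨B, hB⟩ : ∃ B : Matrix (Fin n ⊕ (Fin n ⊕ Fin n)) (Fin n ⊕ (Fin n ⊕ Fin n)) ℝ, Q = Bᴴ * B := by
      open scoped MatrixOrder in exact CStarAlgebra.nonneg_iff_eq_star_mul_self.mp hQpsd.nonneg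
    rw [conjT_eq_T] at hB
    set P : Matrix (Fin n) (Fin n ⊕ (Fin n ⊕ Fin n)) (MvPolynomial (Fin 2) ℝ) :=
      Matrix.of fun a u =>
        Sum.elim (fun c => if c = a then 1 else 0)
          (Sum.elim (fun c => if c = a then X 0 else 0)
            (fun c => if c = a then X 1 else 0)) u with hP
    set S₀ : Matrix (Fin n) (Fin n) (MvPolynomial (Fin 2) ℝ) :=
      P * (Q.map (C : ℝ →+* MvPolynomial (Fin 2) ℝ)) * Pᵀ with hS₀def
    set S₁ : Matrix (Fin n) (Fin n) ℝ :=
      Matrix.of fun a b => Q (.inr (.inl a)) (.inr (.inl b)) with hS₁def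
    set S₂ : Matrix (Fin n) (Fin n) ℝ :=
      Matrix.of fun a b => Q (.inr (.inr a)) (.inr (.inr b)) with hS₂def
    have hS₀ : ∀ a b, S₀ a b =
        C (Q (.inl a) (.inl b))
        + X 0 * C (Q (.inr (.inl a)) (.inl b)) + X 1 * C (Q (.inr (.inr a)) (.inl b))
        + C (Q (.inl a) (.inr (.inl b))) * X 0 + C (Q (.inl a) (.inr (.inr b))) * X 1
        + X 0 * C (Q (.inr (.inl a)) (.inr (.inl b))) * X 0
        + X 0 * C (Q (.inr (.inl a)) (.inr (.inr b))) * X 1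
        + X 1 * C (Q (.inr (.inr a)) (.inr (.inl b))) * X 0
        + X 1 * C (Q (.inr (.inr a)) (.inr (.inr b))) * X 1 := by
      intro a b
      rw [hS₀def]
      simp only [Matrix.mul_apply, Matrix.transpose_apply, Fintype.sum_sum_type, hP,
        Matrix.of_apply, Sum.elim_inl, Sum.elim_inr, Matrix.map_apply, ite_mul, mul_ite,
        one_mul, mul_one, zero_mul, mul_zero, Finset.sum_ite_eq', Finset.mem_univ, if_true]
      ring
    refine ⟨S₀, S₁, S₂, ?_, ?_, ?_, ?_, ?_⟩
    · -- SOS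
      refine ⟨n + (n + n), ?_⟩
      set e : (Fin n ⊕ (Fin n ⊕ Fin n)) ≃ Fin (n + (n + n)) :=
        (Equiv.sumCongr (Equiv.refl (Fin n)) finSumFinEquiv).trans finSumFinEquiv with he
      set T0 : Matrix (Fin n) (Fin n ⊕ (Fin n ⊕ Fin n)) (MvPolynomial (Fin 2) ℝ) :=
        P * (Bᵀ.map (C : ℝ →+* MvPolynomial (Fin 2) ℝ)) with hT0
      refine ⟨T0.submatrix id e.symm, ?_⟩
      have key : S₀ = T0 * T0ᵀ := by
        have : T0ᵀ = (B.map (C : ℝ →+* MvPolynomial (Fin 2) ℝ)) * Pᵀ := by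
          rw [hT0, Matrix.transpose_mul, Matrix.transpose_map, Matrix.transpose_transpose]
        rw [this, hT0, hS₀def, hB]
        rw [Matrix.map_mul (f := (C : ℝ →+* MvPolynomial (Fin 2) ℝ))]
        simp only [Matrix.mul_assoc]
      rw [key]
      refine Matrix.ext fun a b => ?_
      rw [Matrix.mul_apply, Matrix.mul_apply]
      apply Fintype.sum_equiv e
      intro u
      simp [Matrix.submatrix_apply, Matrix.transpose_apply]
    · -- degree
      intro a b
      have hx0 : (X 0 : MvPolynomial (Fin 2) ℝ).totalDegree ≤ 1 := le_of_eq (totalDegree_X 0)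
      have hx1 : (X 1 : MvPolynomial (Fin 2) ℝ).totalDegree ≤ 1 := le_of_eq (totalDegree_X 1)
      have hmul2 : ∀ (p : MvPolynomial (Fin 2) ℝ) (r : ℝ) (q : MvPolynomial (Fin 2) ℝ),
          p.totalDegree ≤ 1 → q.totalDegree ≤ 1 → (p * C r * q).totalDegree ≤ 2 := by
        intro p r q hp hq
        calc (p * C r * q).totalDegree ≤ (p * C r).totalDegree + q.totalDegree :=
              totalDegree_mul _ _
          _ ≤ (p.totalDegree + (C r).totalDegree) + q.totalDegree :=
              add_le_add_left (totalDegree_mul _ _) _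
          _ ≤ 2 := by
              rw [totalDegree_C]
              omega
      have hC2 : ∀ r : ℝ, (C r : MvPolynomial (Fin 2) ℝ).totalDegree ≤ 2 := by
        intro r; rw [totalDegree_C]; omega
      have hCX : ∀ (r : ℝ) (i : Fin 2), ((C r : MvPolynomial (Fin 2) ℝ) * X i).totalDegree ≤ 2 := by
        intro r i
        calc ((C r : MvPolynomial (Fin 2) ℝ) * X i).totalDegree
            ≤ (C r : MvPolynomial (Fin 2) ℝ).totalDegree + (X i).totalDegree :=
              totalDegree_mul _ _
          _ ≤ 2 := by rw [totalDegree_C, totalDegree_X]; omega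
      have hXC : ∀ (i : Fin 2) (r : ℝ), ((X i : MvPolynomial (Fin 2) ℝ) * C r).totalDegree ≤ 2 := by
        intro i r
        calc ((X i : MvPolynomial (Fin 2) ℝ) * C r).totalDegree
            ≤ (X i : MvPolynomial (Fin 2) ℝ).totalDegree + (C r).totalDegree :=
              totalDegree_mul _ _
          _ ≤ 2 := by rw [totalDegree_C, totalDegree_X]; omega
      rw [hS₀ a b]
      refine le_trans (totalDegree_add _ _) (max_le ?_ (hmul2 _ _ _ hx1 hx1))
      refine le_trans (totalDegree_add _ _) (max_le ?_ (hmul2 _ _ _ hx1 hx0))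
      refine le_trans (totalDegree_add _ _) (max_le ?_ (hmul2 _ _ _ hx0 hx1))
      refine le_trans (totalDegree_add _ _) (max_le ?_ (hmul2 _ _ _ hx0 hx0))
      refine le_trans (totalDegree_add _ _) (max_le ?_ (hCX _ _))
      refine le_trans (totalDegree_add _ _) (max_le ?_ (hCX _ _))
      refine le_trans (totalDegree_add _ _) (max_le ?_ (hXC _ _))
      refine le_trans (totalDegree_add _ _) (max_le ?_ (hXC _ _))
      exact hC2 _
    · -- S₁ psd
      have := hQpsd.submatrix (fun a : Fin n => (Sum.inr (Sum.inl a) : Fin n ⊕ (Fin n ⊕ Fin n)))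
      exact this
    · have := hQpsd.submatrix (fun a : Fin n => (Sum.inr (Sum.inr a) : Fin n ⊕ (Fin n ⊕ Fin n)))
      exact this
    · -- the identity
      ext a b
      obtain ⟨e0, e1, e2, e3⟩ := hQeq a b
      have h21 : Q (.inr (.inr a)) (.inr (.inl b)) = - Q (.inr (.inl a)) (.inr (.inr b)) := by
        linarith
      simp only [Matrix.add_apply, Matrix.smul_apply, Matrix.map_apply, smul_eq_mul]
      rw [hS₀ a b, ← e0, ← e1, ← e2, h21]
      simp only [map_add, map_neg, hS₁def, hS₂def, Matrix.of_apply]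
      ring
  · -- sufficiency
    rintro ⟨S₀, S₁, S₂, ⟨q, Tm, hT⟩, _, hS₁, hS₂, hid⟩ δ₁ δ₂ hδ₁ hδ₂
    set f : Fin 2 → ℝ := ![δ₁, δ₂] with hf
    set φ : MvPolynomial (Fin 2) ℝ →+* ℝ := (MvPolynomial.eval f) with hφ
    have key : H₀ + δ₁ • H₁ + δ₂ • H₂ =
        (Tm.map φ) * (Tm.map φ)ᵀ + (1 - δ₁ ^ 2) • S₁ + (1 - δ₂ ^ 2) • S₂ := by
      ext a b
      have h := congrFun (congrFun hid a) b
      rw [hT] at h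
      have h2 := congrArg φ h
      simp only [Matrix.add_apply, Matrix.smul_apply, Matrix.map_apply, smul_eq_mul,
        Matrix.mul_apply, Matrix.transpose_apply, _root_.map_add, _root_.map_mul, map_sum, _root_.map_sub,
        _root_.map_one, _root_.map_pow, MvPolynomial.eval_C, MvPolynomial.eval_X, hφ] at h2
      simp only [Matrix.add_apply, Matrix.smul_apply, Matrix.map_apply, smul_eq_mul,
        Matrix.mul_apply, Matrix.transpose_apply]
      rw [hf] at h2
      simpa [Matrix.cons_val_zero, Matrix.cons_val_one, Matrix.head_cons] using h2
    rw [key]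
    have hp1 : ((Tm.map φ) * (Tm.map φ)ᵀ).PosSemidef := by
      have := Matrix.posSemidef_self_mul_conjTranspose (Tm.map φ)
      rwa [conjT_eq_T] at this
    have hsq1 : (0:ℝ) ≤ 1 - δ₁ ^ 2 := by
      rw [abs_le] at hδ₁; nlinarith [hδ₁.1, hδ₁.2]
    have hsq2 : (0:ℝ) ≤ 1 - δ₂ ^ 2 := by
      rw [abs_le] at hδ₂; nlinarith [hδ₂.1, hδ₂.2]
    exact (hp1.add (psd_smul hS₁ hsq1)).add (psd_smul hS₂ hsq2)
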